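/- arXiv:gr-qc/0505146 — 2 statements merged into one kernel-verified Lean document; each statement's English description precedes it below -/
import Mathlib

section
/- With τ = f τ_0 as above, the identity D_μ X^μ = div_τ X holds for all vector fields X if and only if T_μ + V_μ = ∂_μ ln f, i.e., the 1-form t + v is exact with potential ln f. -/
open scoped BigOperators

/-- Partial derivative `∂_μ f` at `x` (coordinate direction `μ`). -/
noncomputable def pd {n : ℕ} (μ : Fin n) (f : (Fin n → ℝ) → ℝ) (x : Fin n → ℝ) : ℝ :=
  fderiv ℝ f x (Pi.single μ 1)

/-- Covariant derivative of the metric, `D_μ g_{νκ}`. -/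
noncomputable def covDg {n : ℕ} (Γ : Fin n → Fin n → Fin n → (Fin n → ℝ) → ℝ)
    (g : Fin n → Fin n → (Fin n → ℝ) → ℝ) (μ ν κ : Fin n) (x : Fin n → ℝ) : ℝ :=
  pd μ (g ν κ) x - (∑ σ, Γ μ ν σ x * g σ κ x) - ∑ σ, Γ μ κ σ x * g ν σ x

/-- Torsion tensor with lowered last index, `T_{μνκ} = (Γ_{μν}^σ - Γ_{νμ}^σ) g_{σκ}`. -/
noncomputable def torLow {n : ℕ} (Γ : Fin n → Fin n → Fin n → (Fin n → ℝ) → ℝ)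
    (g : Fin n → Fin n → (Fin n → ℝ) → ℝ) (μ ν κ : Fin n) (x : Fin n → ℝ) : ℝ :=
  ∑ σ, (Γ μ ν σ x - Γ ν μ σ x) * g σ κ x

/-- Contorsion tensor `K_{μνκ} = -(1/2)(T_{νκμ} + T_{μκν} - T_{μνκ})`. -/
noncomputable def conLow {n : ℕ} (Γ : Fin n → Fin n → Fin n → (Fin n → ℝ) → ℝ)
    (g : Fin n → Fin n → (Fin n → ℝ) → ℝ) (μ ν κ : Fin n) (x : Fin n → ℝ) : ℝ :=
  -(1/2) * (torLow Γ g ν κ μ x + torLow Γ g μ κ ν x - torLow Γ g μ ν κ x)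

/-- Nonmetricity tensor `V_{μνκ} = -(1/2)(D_μ g_{νκ} + D_ν g_{κμ} - D_κ g_{μν})`. -/
noncomputable def nonmetLow {n : ℕ} (Γ : Fin n → Fin n → Fin n → (Fin n → ℝ) → ℝ)
    (g : Fin n → Fin n → (Fin n → ℝ) → ℝ) (μ ν κ : Fin n) (x : Fin n → ℝ) : ℝ :=
  -(1/2) * (covDg Γ g μ ν κ x + covDg Γ g ν κ μ x - covDg Γ g κ μ ν x)

/-- Christoffel symbols `{κ over μν}` of the metric `g` (with inverse metric `ginv`). -/
noncomputable def chr {n : ℕ} (g ginv : Fin n → Fin n → (Fin n → ℝ) → ℝ)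
    (κ μ ν : Fin n) (x : Fin n → ℝ) : ℝ :=
  (1/2) * ∑ σ, ginv κ σ x * (pd μ (g ν σ) x + pd ν (g σ μ) x - pd σ (g μ ν) x)

/-- Trace of the torsion tensor, `T_ν = T_{μν}^μ`. -/
noncomputable def torTr {n : ℕ} (Γ : Fin n → Fin n → Fin n → (Fin n → ℝ) → ℝ)
    (ν : Fin n) (x : Fin n → ℝ) : ℝ :=
  ∑ μ, (Γ μ ν μ x - Γ ν μ μ x)

/-- Trace of the nonmetricity tensor, `V_ν = V_{μν}{}^μ = g^{μσ} V_{μνσ}`. -/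
noncomputable def nonmetTr {n : ℕ} (Γ : Fin n → Fin n → Fin n → (Fin n → ℝ) → ℝ)
    (g ginv : Fin n → Fin n → (Fin n → ℝ) → ℝ) (ν : Fin n) (x : Fin n → ℝ) : ℝ :=
  ∑ μ, ∑ σ, ginv μ σ x * nonmetLow Γ g μ ν σ x

/-- `√g`, the square root of the metric determinant. -/
noncomputable def sqrtg {n : ℕ} (g : Fin n → Fin n → (Fin n → ℝ) → ℝ)
    (x : Fin n → ℝ) : ℝ :=
  Real.sqrt (Matrix.det (Matrix.of fun μ ν => g μ ν x))

/-! ### Auxiliary lemmas -/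

lemma hasFDerivAt_detg {n : ℕ} (g : Fin n → Fin n → (Fin n → ℝ) → ℝ)
    (hg : ∀ μ ν, Differentiable ℝ (g μ ν)) (x : Fin n → ℝ) :
    HasFDerivAt (fun y => Matrix.det (Matrix.of fun μ ν => g μ ν y))
      (∑ σ : Equiv.Perm (Fin n), ((Equiv.Perm.sign σ : ℤ) : ℝ) •
        ∑ i, (∏ j ∈ Finset.univ.erase i, g (σ j) j x) • fderiv ℝ (g (σ i) i) x) x := by
  have : (fun y => Matrix.det (Matrix.of fun μ ν => g μ ν y))
      = fun y => ∑ σ : Equiv.Perm (Fin n), ((Equiv.Perm.sign σ : ℤ) : ℝ) * ∏ i, g (σ i) i y := by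
    funext y; rw [Matrix.det_apply']; rfl
  rw [this]
  exact HasFDerivAt.fun_sum fun σ _ =>
    (HasFDerivAt.finset_prod (fun i _ => ((hg (σ i) i) x).hasFDerivAt)).const_mul _

lemma pd_detg {n : ℕ} (g : Fin n → Fin n → (Fin n → ℝ) → ℝ)
    (hg : ∀ μ ν, Differentiable ℝ (g μ ν)) (ν : Fin n) (x : Fin n → ℝ) :
    pd ν (fun y => Matrix.det (Matrix.of fun μ ν => g μ ν y)) x
      = ∑ i, ∑ k, Matrix.adjugate (Matrix.of fun μ ν => g μ ν x) i k * pd ν (g k i) x := by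
  have h := (hasFDerivAt_detg g hg x).fderiv
  unfold pd
  rw [h]
  simp only [ContinuousLinearMap.coe_sum', Finset.sum_apply, ContinuousLinearMap.coe_smul',
    Pi.smul_apply, smul_eq_mul, Finset.mul_sum]
  rw [Finset.sum_comm]
  refine Finset.sum_congr rfl fun i _ => ?_
  have hkey : ∀ σ : Equiv.Perm (Fin n),
      ((Equiv.Perm.sign σ : ℤ) : ℝ) * ((∏ j ∈ Finset.univ.erase i, g (σ j) j x) *
        fderiv ℝ (g (σ i) i) x (Pi.single ν 1))
      = ((Equiv.Perm.sign σ : ℤ) : ℝ) *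
        ∏ j, ((Matrix.of fun μ ν => g μ ν x).updateCol i
            (fun k => fderiv ℝ (g k i) x (Pi.single ν 1))) (σ j) j := by
    intro σ
    congr 1
    rw [← Finset.mul_prod_erase _ _ (Finset.mem_univ i)]
    rw [Matrix.updateCol_self, mul_comm]
    congr 1
    refine Finset.prod_congr rfl fun j hj => ?_
    rw [Matrix.updateCol_apply, if_neg (Finset.mem_erase.mp hj).1]
    rfl
  rw [Finset.sum_congr rfl fun σ _ => hkey σ, ← Matrix.det_apply']
  rw [← Matrix.cramer_apply, Matrix.cramer_eq_adjugate_mulVec]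
  rfl

lemma adj_eq {n : ℕ} (g ginv : Fin n → Fin n → (Fin n → ℝ) → ℝ) {x : Fin n → ℝ}
    (hdet : 0 < Matrix.det (Matrix.of fun μ ν => g μ ν x))
    (hinv : ∀ μ ν, (∑ σ, ginv μ σ x * g σ ν x) = if μ = ν then (1:ℝ) else 0) :
    ∀ i k, Matrix.adjugate (Matrix.of fun μ ν => g μ ν x) i k
      = Matrix.det (Matrix.of fun μ ν => g μ ν x) * ginv i k x := by
  set G : Matrix (Fin n) (Fin n) ℝ := Matrix.of fun μ ν => g μ ν x with hG
  set Gi : Matrix (Fin n) (Fin n) ℝ := Matrix.of fun μ ν => ginv μ ν x with hGi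
  have hmul : Gi * G = 1 := by
    ext μ ν
    rw [Matrix.mul_apply, Matrix.one_apply]
    exact hinv μ ν
  have hGinv : G⁻¹ = Gi := Matrix.inv_eq_left_inv hmul
  have h1 : G⁻¹ = (Matrix.det G)⁻¹ • Matrix.adjugate G := by
    rw [Matrix.inv_def, Ring.inverse_eq_inv]
  intro i k
  have h2 := congrArg (fun M => Matrix.det G * M i k) (h1.symm.trans hGinv)
  show Matrix.adjugate G i k = Matrix.det G * Gi i k
  simpa [Matrix.smul_apply, smul_eq_mul, ← mul_assoc, mul_inv_cancel₀ hdet.ne'] using h2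

lemma delta1 {n : ℕ} (g ginv : Fin n → Fin n → (Fin n → ℝ) → ℝ) (x : Fin n → ℝ)
    (hinv : ∀ μ ν, (∑ σ, ginv μ σ x * g σ ν x) = if μ = ν then (1:ℝ) else 0)
    (c : Fin n → Fin n → ℝ) :
    ∑ μ, ∑ σ, ginv μ σ x * ∑ l, c μ l * g σ l x = ∑ μ, c μ μ := by
  refine Finset.sum_congr rfl fun μ _ => ?_
  calc ∑ σ, ginv μ σ x * ∑ l, c μ l * g σ l x
      = ∑ σ, ∑ l, c μ l * (ginv μ σ x * g σ l x) := by
        refine Finset.sum_congr rfl fun σ _ => ?_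
        rw [Finset.mul_sum]; refine Finset.sum_congr rfl fun l _ => by ring
    _ = ∑ l, c μ l * ∑ σ, ginv μ σ x * g σ l x := by
        rw [Finset.sum_comm]
        refine Finset.sum_congr rfl fun l _ => by rw [Finset.mul_sum]
    _ = c μ μ := by
        simp only [hinv, mul_ite, mul_one, mul_zero]
        simp

lemma delta2 {n : ℕ} (g ginv : Fin n → Fin n → (Fin n → ℝ) → ℝ) (x : Fin n → ℝ)
    (hinv' : ∀ μ ν, (∑ σ, g μ σ x * ginv σ ν x) = if μ = ν then (1:ℝ) else 0)
    (c : Fin n → Fin n → ℝ) :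
    ∑ μ, ∑ σ, ginv μ σ x * ∑ l, c σ l * g l μ x = ∑ σ, c σ σ := by
  rw [Finset.sum_comm]
  refine Finset.sum_congr rfl fun σ _ => ?_
  calc ∑ μ, ginv μ σ x * ∑ l, c σ l * g l μ x
      = ∑ μ, ∑ l, c σ l * (g l μ x * ginv μ σ x) := by
        refine Finset.sum_congr rfl fun μ _ => ?_
        rw [Finset.mul_sum]; refine Finset.sum_congr rfl fun l _ => by ring
    _ = ∑ l, c σ l * ∑ μ, g l μ x * ginv μ σ x := by
        rw [Finset.sum_comm]
        refine Finset.sum_congr rfl fun l _ => by rw [Finset.mul_sum]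
    _ = c σ σ := by
        simp only [hinv', mul_ite, mul_one, mul_zero]
        simp

lemma ginv_symm {n : ℕ} (g ginv : Fin n → Fin n → (Fin n → ℝ) → ℝ) (x : Fin n → ℝ)
    (hsymm : ∀ μ ν, g μ ν = g ν μ)
    (hinv : ∀ μ ν, (∑ σ, ginv μ σ x * g σ ν x) = if μ = ν then (1:ℝ) else 0)
    (hinv' : ∀ μ ν, (∑ σ, g μ σ x * ginv σ ν x) = if μ = ν then (1:ℝ) else 0) :
    ∀ μ ν, ginv μ ν x = ginv ν μ x := by
  set G : Matrix (Fin n) (Fin n) ℝ := Matrix.of fun μ ν => g μ ν x with hG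
  set Gi : Matrix (Fin n) (Fin n) ℝ := Matrix.of fun μ ν => ginv μ ν x with hGi
  have hmul : Gi * G = 1 := by
    ext μ ν; rw [Matrix.mul_apply, Matrix.one_apply]; exact hinv μ ν
  have hmul' : G * Gi = 1 := by
    ext μ ν; rw [Matrix.mul_apply, Matrix.one_apply]; exact hinv' μ ν
  have hGt : G.transpose = G := by
    ext μ ν; show g ν μ x = g μ ν x; rw [hsymm]
  have h1 : Gi.transpose * G = 1 := by
    calc Gi.transpose * G = Gi.transpose * G.transpose := by rw [hGt]
    _ = (G * Gi).transpose := by rw [Matrix.transpose_mul]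
    _ = 1 := by rw [hmul', Matrix.transpose_one]
  have h2 : Gi.transpose = Gi := by
    calc Gi.transpose = Gi.transpose * (G * Gi) := by rw [hmul', mul_one]
    _ = (Gi.transpose * G) * Gi := by rw [mul_assoc]
    _ = Gi := by rw [h1, one_mul]
  intro μ ν
  exact congrFun (congrFun h2 ν) μ

lemma trace_identity {n : ℕ} (Γ : Fin n → Fin n → Fin n → (Fin n → ℝ) → ℝ)
    (g ginv : Fin n → Fin n → (Fin n → ℝ) → ℝ) (x : Fin n → ℝ)
    (hsymm : ∀ μ ν, g μ ν = g ν μ)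
    (hinv : ∀ μ ν, (∑ σ, ginv μ σ x * g σ ν x) = if μ = ν then (1:ℝ) else 0)
    (hinv' : ∀ μ ν, (∑ σ, g μ σ x * ginv σ ν x) = if μ = ν then (1:ℝ) else 0)
    (ν : Fin n) :
    torTr Γ ν x + nonmetTr Γ g ginv ν x
      = (∑ μ, Γ μ ν μ x) - (1/2) * ∑ i, ∑ k, ginv i k x * pd ν (g k i) x := by
  have hgs := ginv_symm g ginv x hsymm hinv hinv'
  have hA13 : ∑ μ, ∑ σ, ginv μ σ x * covDg Γ g μ ν σ x
      = ∑ μ, ∑ σ, ginv μ σ x * covDg Γ g σ μ ν x := by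
    conv_rhs => rw [Finset.sum_comm]
    refine Finset.sum_congr rfl fun a _ => Finset.sum_congr rfl fun b _ => ?_
    rw [hgs b a]
    congr 1
    unfold covDg
    rw [hsymm ν b]
    have h1 : (∑ σ, Γ a ν σ x * g σ b x) = ∑ σ, Γ a ν σ x * g b σ x := by
      refine Finset.sum_congr rfl fun l _ => by rw [hsymm l b]
    have h2 : (∑ σ, Γ a b σ x * g ν σ x) = ∑ σ, Γ a b σ x * g σ ν x := by
      refine Finset.sum_congr rfl fun l _ => by rw [hsymm ν l]
    rw [h1, h2]; ring
  have hA2 : ∑ μ, ∑ σ, ginv μ σ x * covDg Γ g ν σ μ x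
      = (∑ i, ∑ k, ginv i k x * pd ν (g k i) x) - 2 * ∑ μ, Γ ν μ μ x := by
    have hsplit : ∀ a b : Fin n, ginv a b x * covDg Γ g ν b a x
        = ginv a b x * pd ν (g b a) x - ginv a b x * (∑ l, Γ ν b l x * g l a x)
          - ginv a b x * (∑ l, Γ ν a l x * g b l x) := by
      intro a b; unfold covDg; ring
    calc ∑ μ, ∑ σ, ginv μ σ x * covDg Γ g ν σ μ x
        = (∑ μ, ∑ σ, ginv μ σ x * pd ν (g σ μ) x)
          - (∑ μ, ∑ σ, ginv μ σ x * ∑ l, Γ ν σ l x * g l μ x)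
          - (∑ μ, ∑ σ, ginv μ σ x * ∑ l, Γ ν μ l x * g σ l x) := by
          simp only [hsplit, Finset.sum_sub_distrib]
      _ = (∑ i, ∑ k, ginv i k x * pd ν (g k i) x) - (∑ μ, Γ ν μ μ x) - ∑ μ, Γ ν μ μ x := by
          rw [delta2 g ginv x hinv' (fun b l => Γ ν b l x),
            delta1 g ginv x hinv (fun a l => Γ ν a l x)]
      _ = (∑ i, ∑ k, ginv i k x * pd ν (g k i) x) - 2 * ∑ μ, Γ ν μ μ x := by ring
  have hnm : nonmetTr Γ g ginv ν x
      = -(1/2) * ((∑ μ, ∑ σ, ginv μ σ x * covDg Γ g μ ν σ x)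
          + (∑ μ, ∑ σ, ginv μ σ x * covDg Γ g ν σ μ x)
          - ∑ μ, ∑ σ, ginv μ σ x * covDg Γ g σ μ ν x) := by
    unfold nonmetTr nonmetLow
    rw [← Finset.sum_add_distrib, ← Finset.sum_sub_distrib]
    rw [Finset.mul_sum]
    refine Finset.sum_congr rfl fun a _ => ?_
    rw [← Finset.sum_add_distrib, ← Finset.sum_sub_distrib, Finset.mul_sum]
    refine Finset.sum_congr rfl fun b _ => by ring
  rw [hnm, hA13, hA2]
  unfold torTr
  rw [Finset.sum_sub_distrib]
  ring

lemma pd_const {n : ℕ} (κ : Fin n) (c : ℝ) (x : Fin n → ℝ) :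
    pd κ (fun _ => c) x = 0 := by simp [pd]

lemma pd_mul {n : ℕ} {a b : (Fin n → ℝ) → ℝ} {x : Fin n → ℝ} (κ : Fin n)
    (ha : DifferentiableAt ℝ a x) (hb : DifferentiableAt ℝ b x) :
    pd κ (fun y => a y * b y) x = pd κ a x * b x + a x * pd κ b x := by
  unfold pd
  rw [fderiv_fun_mul ha hb]
  simp [smul_eq_mul]
  ring

lemma pd_log {n : ℕ} {f : (Fin n → ℝ) → ℝ} {x : Fin n → ℝ} (κ : Fin n)
    (hf : DifferentiableAt ℝ f x) (hfx : f x ≠ 0) :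
    pd κ (fun y => Real.log (f y)) x = pd κ f x / f x := by
  unfold pd
  rw [(hf.hasFDerivAt.log hfx).fderiv]
  simp [div_eq_inv_mul]

lemma differentiableAt_sqrtg {n : ℕ} (g : Fin n → Fin n → (Fin n → ℝ) → ℝ)
    (hg : ∀ μ ν, Differentiable ℝ (g μ ν))
    (hdet : ∀ y, 0 < Matrix.det (Matrix.of fun μ ν => g μ ν y)) (x : Fin n → ℝ) :
    DifferentiableAt ℝ (sqrtg g) x :=
  ((hasFDerivAt_detg g hg x).sqrt (hdet x).ne').differentiableAt

lemma pd_sqrtg {n : ℕ} (g ginv : Fin n → Fin n → (Fin n → ℝ) → ℝ)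
    (hg : ∀ μ ν, Differentiable ℝ (g μ ν))
    (hdet : ∀ y, 0 < Matrix.det (Matrix.of fun μ ν => g μ ν y))
    (hinv : ∀ μ ν x, (∑ σ, ginv μ σ x * g σ ν x) = if μ = ν then (1:ℝ) else 0)
    (ν : Fin n) (x : Fin n → ℝ) :
    pd ν (sqrtg g) x
      = (1/2) * sqrtg g x * ∑ i, ∑ k, ginv i k x * pd ν (g k i) x := by
  set d := Matrix.det (Matrix.of fun μ ν => g μ ν x) with hd
  have hval : pd ν (fun y => Matrix.det (Matrix.of fun μ ν => g μ ν y)) x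
      = d * ∑ i, ∑ k, ginv i k x * pd ν (g k i) x := by
    rw [pd_detg g hg ν x, Finset.mul_sum]
    refine Finset.sum_congr rfl fun i _ => ?_
    rw [Finset.mul_sum]
    refine Finset.sum_congr rfl fun k _ => ?_
    rw [adj_eq g ginv (hdet x) (fun μ ν => hinv μ ν x) i k]
    ring
  have hsq : Real.sqrt d ≠ 0 := (Real.sqrt_pos.mpr (hdet x)).ne'
  have h := ((hasFDerivAt_detg g hg x).sqrt (hdet x).ne')
  have h1 : pd ν (sqrtg g) x
      = 1 / (2 * Real.sqrt d)
        * pd ν (fun y => Matrix.det (Matrix.of fun μ ν => g μ ν y)) x := by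
    unfold pd sqrtg
    rw [h.fderiv]
    simp only [pd, ContinuousLinearMap.coe_smul', Pi.smul_apply, smul_eq_mul]
    rw [(hasFDerivAt_detg g hg x).fderiv]
  rw [h1, hval]
  have hdd : Real.sqrt d * Real.sqrt d = d := Real.mul_self_sqrt (hdet x).le
  show 1 / (2 * Real.sqrt d) * (d * _) = 1/2 * sqrtg g x * _
  have hsg : sqrtg g x = Real.sqrt d := rfl
  rw [hsg, ← hdd]
  field_simp
  rw [Real.sqrt_sq (Real.sqrt_nonneg _)]

/-- `D_μ X^μ = div_τ X` holds for all vector fields `X` (with `τ = f √g dx^1∧⋯∧dx^n` and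
`div_τ` defined by `£_X τ = (div_τ X) τ`) if and only if `T_μ + V_μ = ∂_μ ln f`. -/
theorem covariant_div_eq_div_iff {n : ℕ}
    (Γ : Fin n → Fin n → Fin n → (Fin n → ℝ) → ℝ)
    (g ginv : Fin n → Fin n → (Fin n → ℝ) → ℝ)
    (f : (Fin n → ℝ) → ℝ)
    (hsymm : ∀ μ ν, g μ ν = g ν μ)
    (hg : ∀ μ ν, Differentiable ℝ (g μ ν))
    (hdet : ∀ y, 0 < Matrix.det (Matrix.of fun μ ν => g μ ν y))
    (hinv : ∀ μ ν x, (∑ σ, ginv μ σ x * g σ ν x) = if μ = ν then (1:ℝ) else 0)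
    (hinv' : ∀ μ ν x, (∑ σ, g μ σ x * ginv σ ν x) = if μ = ν then (1:ℝ) else 0)
    (hf : Differentiable ℝ f) (hfpos : ∀ y, 0 < f y) :
    (∀ X : Fin n → (Fin n → ℝ) → ℝ, (∀ κ, Differentiable ℝ (X κ)) → ∀ x,
        ((∑ μ, pd μ (X μ) x) + ∑ μ, ∑ σ, Γ μ σ μ x * X σ x)
          = (∑ κ, pd κ (fun y => X κ y * (f y * sqrtg g y)) x) / (f x * sqrtg g x))
      ↔ ∀ μ x, torTr Γ μ x + nonmetTr Γ g ginv μ x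
          = pd μ (fun y => Real.log (f y)) x := by
  -- notation
  set S : Fin n → (Fin n → ℝ) → ℝ :=
    fun ν x => ∑ i, ∑ k, ginv i k x * pd ν (g k i) x with hS
  have hsgpos : ∀ x, 0 < sqrtg g x := fun x => Real.sqrt_pos.mpr (hdet x)
  have hWpos : ∀ x, 0 < f x * sqrtg g x := fun x => mul_pos (hfpos x) (hsgpos x)
  have hWdiff : ∀ x, DifferentiableAt ℝ (fun y => f y * sqrtg g y) x :=
    fun x => (hf x).mul (differentiableAt_sqrtg g hg hdet x)
  have hpdW : ∀ κ x, pd κ (fun y => f y * sqrtg g y) x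
      = (f x * sqrtg g x) * (pd κ f x / f x + (1/2) * S κ x) := by
    intro κ x
    rw [pd_mul κ (hf x) (differentiableAt_sqrtg g hg hdet x),
      pd_sqrtg g ginv hg hdet hinv κ x]
    have hf0 : f x ≠ 0 := (hfpos x).ne'
    field_simp
    ring
  have hlog : ∀ μ x, pd μ (fun y => Real.log (f y)) x = pd μ f x / f x :=
    fun μ x => pd_log μ (hf x) (hfpos x).ne'
  have htr : ∀ ν x, torTr Γ ν x + nonmetTr Γ g ginv ν x
      = (∑ μ, Γ μ ν μ x) - (1/2) * S ν x :=
    fun ν x => trace_identity Γ g ginv x hsymm (fun μ ν' => hinv μ ν' x)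
      (fun μ ν' => hinv' μ ν' x) ν
  constructor
  · intro h μ0 x
    have hX : ∀ κ : Fin n, Differentiable ℝ
        (fun _ : Fin n → ℝ => if κ = μ0 then (1:ℝ) else 0) :=
      fun κ => differentiable_const _
    have h1 := h (fun κ _ => if κ = μ0 then (1:ℝ) else 0) hX x
    -- simplify LHS
    have e1 : (∑ μ, pd μ (fun _ : Fin n → ℝ => if μ = μ0 then (1:ℝ) else 0) x) = 0 := by
      simp [pd_const]
    have e2 : (∑ μ, ∑ σ, Γ μ σ μ x * (if σ = μ0 then (1:ℝ) else 0)) = ∑ μ, Γ μ μ0 μ x := by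
      refine Finset.sum_congr rfl fun μ _ => ?_
      simp [mul_ite]
    -- simplify RHS
    have e3 : ∀ κ : Fin n, pd κ (fun y => (if κ = μ0 then (1:ℝ) else 0) * (f y * sqrtg g y)) x
        = if κ = μ0 then pd κ (fun y => f y * sqrtg g y) x else 0 := by
      intro κ
      by_cases hκ : κ = μ0
      · simp only [hκ, if_pos, one_mul]
      · simp only [hκ, if_neg, not_false_iff, zero_mul]
        simpa using pd_const κ 0 x
    have e4 : (∑ κ, pd κ (fun y => (if κ = μ0 then (1:ℝ) else 0) * (f y * sqrtg g y)) x)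
        = pd μ0 (fun y => f y * sqrtg g y) x := by
      rw [Finset.sum_congr rfl fun κ _ => e3 κ]
      simp
    rw [e1, e2, e4, hpdW] at h1
    have hW0 : f x * sqrtg g x ≠ 0 := (hWpos x).ne'
    rw [mul_div_cancel_left₀ _ hW0] at h1
    rw [htr, hlog]
    linarith [h1]
  · intro h X hX x
    have hW0 : f x * sqrtg g x ≠ 0 := (hWpos x).ne'
    have hc : ∀ σ, (∑ μ, Γ μ σ μ x) = pd σ f x / f x + (1/2) * S σ x := by
      intro σ
      have h2 := h σ x
      rw [htr, hlog] at h2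
      linarith [h2]
    have e5 : ∀ κ, pd κ (fun y => X κ y * (f y * sqrtg g y)) x
        = (f x * sqrtg g x)
            * (pd κ (X κ) x + X κ x * (pd κ f x / f x + (1/2) * S κ x)) := by
      intro κ
      rw [pd_mul κ (hX κ x) (hWdiff x), hpdW]
      ring
    have e6 : (∑ κ, pd κ (fun y => X κ y * (f y * sqrtg g y)) x)
        = (f x * sqrtg g x)
            * ∑ κ, (pd κ (X κ) x + X κ x * (pd κ f x / f x + (1/2) * S κ x)) := by
      rw [Finset.sum_congr rfl fun κ _ => e5 κ, ← Finset.mul_sum]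
    rw [e6, mul_div_cancel_left₀ _ hW0, Finset.sum_add_distrib]
    have e7 : (∑ μ, ∑ σ, Γ μ σ μ x * X σ x)
        = ∑ σ, X σ x * (pd σ f x / f x + (1/2) * S σ x) := by
      rw [Finset.sum_comm]
      refine Finset.sum_congr rfl fun σ _ => ?_
      rw [← Finset.sum_mul, hc σ]
      ring
    rw [e7]
end

section
/- The Riemann curvature tensor R_{μνσ}^κ = ∂_μ Γ_{νσ}^κ - ∂_ν Γ_{μσ}^κ + Γ_{μρ}^κ Γ_{νσ}^ρ - Γ_{νρ}^κ Γ_{μσ}^ρ of an affine connection is invariant under the λ-transformation Γ_{μν}^κ → Γ_{μν}^κ + δ^κ_ν ∂_μ λ for any smooth function λ. -/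
open scoped BigOperators

/-- The λ-transformed connection `Γ_{μν}^κ + δ^κ_ν ∂_μ λ`. -/
noncomputable def lamConn {n : ℕ} (Γ : Fin n → Fin n → Fin n → (Fin n → ℝ) → ℝ)
    (lam : (Fin n → ℝ) → ℝ) (μ ν κ : Fin n) (x : Fin n → ℝ) : ℝ :=
  Γ μ ν κ x + if ν = κ then pd μ lam x else 0

/-- The Riemann curvature tensor of an affine connection,
`R_{μνσ}^κ = ∂_μ Γ_{νσ}^κ - ∂_ν Γ_{μσ}^κ + Γ_{μρ}^κ Γ_{νσ}^ρ - Γ_{νρ}^κ Γ_{μσ}^ρ`. -/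
noncomputable def riemann {n : ℕ} (Γ : Fin n → Fin n → Fin n → (Fin n → ℝ) → ℝ)
    (μ ν σ κ : Fin n) (x : Fin n → ℝ) : ℝ :=
  pd μ (Γ ν σ κ) x - pd ν (Γ μ σ κ) x
    + (∑ ρ, Γ μ ρ κ x * Γ ν σ ρ x) - ∑ ρ, Γ ν ρ κ x * Γ μ σ ρ x

lemma pd_lam_differentiable {n : ℕ} {lam : (Fin n → ℝ) → ℝ} (hlam : ContDiff ℝ 2 lam)
    (ν : Fin n) : Differentiable ℝ (pd ν lam) := by
  have : pd ν lam = (ContinuousLinearMap.apply ℝ ℝ (Pi.single ν (1:ℝ))) ∘ (fderiv ℝ lam) := rfl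
  rw [this]
  exact (ContinuousLinearMap.differentiable _).comp
    ((hlam.fderiv_right (m := 1) (by norm_num)).differentiable (by norm_num))

lemma pd_pd_symm {n : ℕ} {lam : (Fin n → ℝ) → ℝ} (hlam : ContDiff ℝ 2 lam)
    (μ ν : Fin n) (x : Fin n → ℝ) : pd μ (pd ν lam) x = pd ν (pd μ lam) x := by
  have hd : DifferentiableAt ℝ (fderiv ℝ lam) x :=
    ((hlam.fderiv_right (m := 1) (by norm_num)).differentiable one_ne_zero) x
  have key : ∀ v w : Fin n → ℝ,
      fderiv ℝ (fun y => fderiv ℝ lam y v) x w = fderiv ℝ (fderiv ℝ lam) x w v := by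
    intro v w
    have h1 : (fun y => fderiv ℝ lam y v)
        = (ContinuousLinearMap.apply ℝ ℝ v) ∘ (fderiv ℝ lam) := rfl
    rw [h1, fderiv_comp x ((ContinuousLinearMap.apply ℝ ℝ v).differentiableAt) hd]
    simp
  have hsymm : IsSymmSndFDerivAt ℝ lam x :=
    (hlam.contDiffAt).isSymmSndFDerivAt (by norm_num)
  show fderiv ℝ (fun y => fderiv ℝ lam y (Pi.single ν 1)) x (Pi.single μ 1)
      = fderiv ℝ (fun y => fderiv ℝ lam y (Pi.single μ 1)) x (Pi.single ν 1)
  rw [key, key]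
  exact hsymm _ _

/-- The Riemann curvature tensor is invariant under the λ-transformation
`Γ_{μν}^κ → Γ_{μν}^κ + δ^κ_ν ∂_μ λ`. -/
theorem riemann_lambda_invariant {n : ℕ}
    (Γ : Fin n → Fin n → Fin n → (Fin n → ℝ) → ℝ)
    (lam : (Fin n → ℝ) → ℝ)
    (hΓ : ∀ μ ν κ, Differentiable ℝ (Γ μ ν κ))
    (hlam : ContDiff ℝ 2 lam) :
    ∀ μ ν σ κ x, riemann (lamConn Γ lam) μ ν σ κ x = riemann Γ μ ν σ κ x := by
  intro μ ν σ κ x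
  have hpd : ∀ a b c d : Fin n,
      pd a (lamConn Γ lam b c d) x
        = pd a (Γ b c d) x + if c = d then pd a (pd b lam) x else 0 := by
    intro a b c d
    by_cases h : c = d
    · have heq : lamConn Γ lam b c d = fun y => Γ b c d y + pd b lam y := by
        funext y; simp [lamConn, h]
      show fderiv ℝ (lamConn Γ lam b c d) x (Pi.single a 1)
          = fderiv ℝ (Γ b c d) x (Pi.single a 1)
            + if c = d then fderiv ℝ (pd b lam) x (Pi.single a 1) else 0
      rw [heq, fderiv_fun_add (hΓ b c d x) ((pd_lam_differentiable hlam b) x), if_pos h]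
      simp
    · have heq : lamConn Γ lam b c d = Γ b c d := by
        funext y; simp [lamConn, h]
      rw [heq]; simp [h]
  have hsum : ∀ a b : Fin n,
      (∑ ρ, lamConn Γ lam a ρ κ x * lamConn Γ lam b σ ρ x)
        = (∑ ρ, Γ a ρ κ x * Γ b σ ρ x) + Γ a σ κ x * pd b lam x
          + pd a lam x * Γ b σ κ x
          + (if σ = κ then pd a lam x * pd b lam x else 0) := by
    intro a b
    have expand : ∀ ρ : Fin n, lamConn Γ lam a ρ κ x * lamConn Γ lam b σ ρ x
        = Γ a ρ κ x * Γ b σ ρ x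
          + (if ρ = σ then Γ a ρ κ x * pd b lam x else 0)
          + (if ρ = κ then pd a lam x * Γ b σ ρ x else 0)
          + (if ρ = κ then (if σ = ρ then pd a lam x * pd b lam x else 0) else 0) := by
      intro ρ
      simp only [lamConn]
      by_cases h1 : ρ = κ
      · subst h1
        by_cases h2 : σ = ρ
        · simp [h2]; ring
        · simp [h2, Ne.symm h2]; ring
      · by_cases h2 : σ = ρ
        · subst h2
          simp [h1]; ring
        · simp [h1, h2, Ne.symm h2]
    rw [Finset.sum_congr rfl (fun ρ _ => expand ρ)]
    simp only [Finset.sum_add_distrib, Finset.sum_ite_eq', Finset.mem_univ, if_true]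
  simp only [riemann, hpd, hsum]
  by_cases h : σ = κ
  · simp only [h, if_true]
    rw [pd_pd_symm hlam μ ν x]
    ring
  · simp only [h, if_false]
    ring
end
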